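/- Let (M, ρ, μ) be a doubling metric measure space and let x₀ ∈ M be fixed. Suppose {K_j}_{j≥1} are measurable kernels on M × M satisfying |K_j(x,y)| ≤ c 2^{-jA} μ(B(x,1))^{-1} (1 + ρ(x,y))^{-σ-d} for constants c, A > 0 and σ > d, and let φ : M → ℂ satisfy |φ(y)| ≤ C (1 + ρ(y, x₀))^{-σ-d}. Then there is a constant c' > 0 such that for all j ≥ 1 and x ∈ M, |∫_M K_j(x,y) φ(y) dμ(y)| ≤ c' C 2^{-jA} (1 + ρ(x, x₀))^{-σ}. -/

import Mathlib

open MeasureTheory Metric Set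


lemma doubling_iter {M : Type*} [MetricSpace M] [MeasurableSpace M]
    (μ : Measure M) (c₀ : ℝ) (hc₀ : 0 ≤ c₀)
    (hdbl : ∀ (x : M) (r : ℝ), 0 < r →
      (μ (ball x (2 * r))).toReal ≤ c₀ * (μ (ball x r)).toReal)
    (x : M) : ∀ k : ℕ, (μ (ball x (2 ^ k))).toReal ≤ c₀ ^ k * (μ (ball x 1)).toReal := by
  intro k
  induction k with
  | zero => simp
  | succ n ih =>
    have h2 : (2:ℝ) ^ (n+1) = 2 * 2 ^ n := by ring
    rw [h2]
    calc (μ (ball x (2 * 2 ^ n))).toReal ≤ c₀ * (μ (ball x (2^n))).toReal :=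
          hdbl x _ (by positivity)
      _ ≤ c₀ * (c₀ ^ n * (μ (ball x 1)).toReal) := mul_le_mul_of_nonneg_left ih hc₀
      _ = c₀ ^ (n+1) * (μ (ball x 1)).toReal := by ring

lemma pointwise_annulus {M : Type*} [MetricSpace M] (s : ℝ) (hs : 0 ≤ s) (z y : M) :
    ∃ k : ℕ, dist z y < 2 ^ (k+1) ∧ (1 + dist z y) ^ (-s) ≤ (2:ℝ) ^ (-(k:ℝ) * s) := by
  set ρ := dist z y with hρdef
  have hρ0 : 0 ≤ ρ := dist_nonneg
  by_cases h1 : ρ < 1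
  · refine ⟨0, by norm_num; linarith, ?_⟩
    have : (1 + ρ) ^ (-s) ≤ 1 :=
      Real.rpow_le_one_of_one_le_of_nonpos (by linarith) (by linarith)
    simpa using this
  · push_neg at h1
    set k := ⌊Real.logb 2 ρ⌋₊ with hk
    have hρpos : 0 < ρ := by linarith
    have hlogb0 : 0 ≤ Real.logb 2 ρ := Real.logb_nonneg one_lt_two h1
    have hk1 : (k:ℝ) ≤ Real.logb 2 ρ := Nat.floor_le hlogb0
    have hk2 : Real.logb 2 ρ < (k:ℝ) + 1 := Nat.lt_floor_add_one _
    have hρeq : (2:ℝ) ^ (Real.logb 2 ρ) = ρ := Real.rpow_logb two_pos (by norm_num) hρpos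
    have hlow : (2:ℝ) ^ ((k:ℝ)) ≤ ρ := by
      rw [← hρeq]
      exact Real.rpow_le_rpow_of_exponent_le one_le_two hk1
    have hhigh : ρ < 2 ^ (k+1) := by
      have : ρ < (2:ℝ) ^ (((k:ℝ)+1)) := by
        rw [← hρeq]
        exact Real.rpow_lt_rpow_of_exponent_lt one_lt_two hk2
      calc ρ < (2:ℝ) ^ (((k:ℝ)+1)) := this
        _ = 2 ^ (k+1) := by
          rw [show ((k:ℝ)+1) = ((k+1 : ℕ) : ℝ) by push_cast; ring, Real.rpow_natCast]
    refine ⟨k, hhigh, ?_⟩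
    have h2k : (0:ℝ) < 2 ^ ((k:ℝ)) := Real.rpow_pos_of_pos two_pos _
    calc (1 + ρ) ^ (-s) ≤ ((2:ℝ) ^ ((k:ℝ))) ^ (-s) := by
          apply Real.rpow_le_rpow_of_nonpos h2k (by linarith) (by linarith)
      _ = (2:ℝ) ^ (-(k:ℝ) * s) := by
          rw [← Real.rpow_mul (by norm_num)]; ring_nf

lemma exists_majorant {M : Type*} [MetricSpace M] [MeasurableSpace M]
    (μ : Measure M) (c₀ : ℝ) (hc₀ : 1 < c₀)
    (hfin : ∀ (x : M) (r : ℝ), 0 < r → μ (ball x r) < ⊤)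
    (hdbl : ∀ (x : M) (r : ℝ), 0 < r →
      (μ (ball x (2 * r))).toReal ≤ c₀ * (μ (ball x r)).toReal)
    (σ : ℝ) (hσ : Real.logb 2 c₀ < σ) (z : M) :
    ∃ G : M → ENNReal, Measurable G ∧
      (∀ y, ENNReal.ofReal ((1 + dist z y) ^ (-(σ + Real.logb 2 c₀))) ≤ G y) ∧
      ∫⁻ y, G y ∂μ ≤ ENNReal.ofReal
        (c₀ * (1 - (2:ℝ) ^ (-σ))⁻¹ * (μ (ball z 1)).toReal) := by
  set d := Real.logb 2 c₀ with hd
  have hc₀0 : (0:ℝ) < c₀ := lt_trans one_pos hc₀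
  have hd0 : 0 < d := Real.logb_pos one_lt_two hc₀
  have hσ0 : 0 < σ := lt_trans hd0 hσ
  set s := σ + d with hsdef
  have hs0 : 0 < s := by positivity
  set t : ℕ → Set M := fun k => toMeasurable μ (ball z (2 ^ (k+1))) with ht
  set G : M → ENNReal := fun y =>
    ∑' k : ℕ, (t k).indicator (fun _ => ENNReal.ofReal ((2:ℝ) ^ (-(k:ℝ) * s))) y with hG
  have hmeas : Measurable G :=
    Measurable.ennreal_tsum fun k =>
      measurable_const.indicator (measurableSet_toMeasurable μ _)
  refine ⟨G, hmeas, ?_, ?_⟩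
  · intro y
    obtain ⟨k, hk1, hk2⟩ := pointwise_annulus s hs0.le z y
    have hmem : y ∈ t k := subset_toMeasurable μ _ (by
      simp only [mem_ball, dist_comm y z]
      exact hk1)
    calc ENNReal.ofReal ((1 + dist z y) ^ (-s)) ≤ ENNReal.ofReal ((2:ℝ) ^ (-(k:ℝ) * s)) :=
          ENNReal.ofReal_le_ofReal hk2
      _ = (t k).indicator (fun _ => ENNReal.ofReal ((2:ℝ) ^ (-(k:ℝ) * s))) y := by
          rw [indicator_of_mem hmem]
      _ ≤ G y := ENNReal.le_tsum k
  · set V := (μ (ball z 1)).toReal with hV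
    have hV0 : 0 ≤ V := ENNReal.toReal_nonneg
    set r := (2:ℝ) ^ (-σ) with hr
    have hr0 : 0 < r := Real.rpow_pos_of_pos two_pos _
    have hr1 : r < 1 := Real.rpow_lt_one_of_one_lt_of_neg one_lt_two (by linarith)
    have hc₀eq : c₀ = (2:ℝ) ^ d := (Real.rpow_logb two_pos (by norm_num) hc₀0).symm
    have hint : ∫⁻ y, G y ∂μ
        = ∑' k : ℕ, ENNReal.ofReal ((2:ℝ) ^ (-(k:ℝ) * s)) * μ (ball z (2 ^ (k+1))) := by
      rw [hG, lintegral_tsum (fun k =>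
        (measurable_const.indicator (measurableSet_toMeasurable μ _)).aemeasurable)]
      congr 1
      ext k
      rw [lintegral_indicator_const (measurableSet_toMeasurable μ _),
        measure_toMeasurable]
    rw [hint]
    have hterm : ∀ k : ℕ, ENNReal.ofReal ((2:ℝ) ^ (-(k:ℝ) * s)) * μ (ball z (2 ^ (k+1)))
        ≤ ENNReal.ofReal (c₀ * V * r ^ k) := by
      intro k
      have hfink : μ (ball z (2 ^ (k+1))) ≠ ⊤ := (hfin z _ (by positivity)).ne
      rw [← ENNReal.ofReal_toReal hfink, ← ENNReal.ofReal_mul (by positivity)]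
      apply ENNReal.ofReal_le_ofReal
      have hvol : (μ (ball z (2 ^ (k+1)))).toReal ≤ c₀ ^ (k+1) * V :=
        doubling_iter μ c₀ hc₀0.le hdbl z (k+1)
      calc (2:ℝ) ^ (-(k:ℝ) * s) * (μ (ball z (2 ^ (k+1)))).toReal
          ≤ (2:ℝ) ^ (-(k:ℝ) * s) * (c₀ ^ (k+1) * V) := by
            apply mul_le_mul_of_nonneg_left hvol (by positivity)
        _ = c₀ * V * r ^ k := by
            have e1 : c₀ ^ (k+1) = (2:ℝ) ^ (d * ((k:ℝ)+1)) := by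
              rw [hc₀eq, ← Real.rpow_natCast ((2:ℝ)^d) (k+1),
                ← Real.rpow_mul (by norm_num : (0:ℝ) ≤ 2)]
              congr 1
              push_cast
              ring
            have e2 : r ^ k = (2:ℝ) ^ (-σ * (k:ℝ)) := by
              rw [hr, ← Real.rpow_natCast ((2:ℝ)^(-σ)) k,
                ← Real.rpow_mul (by norm_num : (0:ℝ) ≤ 2)]
            have e3 : (2:ℝ) ^ (-(k:ℝ) * s) * (2:ℝ) ^ (d * ((k:ℝ)+1))
                = (2:ℝ) ^ d * (2:ℝ) ^ (-σ * (k:ℝ)) := by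
              rw [← Real.rpow_add two_pos, ← Real.rpow_add two_pos]
              congr 1
              rw [hsdef]
              ring
            rw [e1, e2, hc₀eq]
            linear_combination V * e3
    calc ∑' k : ℕ, ENNReal.ofReal ((2:ℝ) ^ (-(k:ℝ) * s)) * μ (ball z (2 ^ (k+1)))
        ≤ ∑' k : ℕ, ENNReal.ofReal (c₀ * V * r ^ k) := ENNReal.tsum_le_tsum hterm
      _ = ENNReal.ofReal (∑' k : ℕ, c₀ * V * r ^ k) := by
          rw [ENNReal.ofReal_tsum_of_nonneg (fun k => by positivity)
            ((summable_geometric_of_lt_one hr0.le hr1).mul_left _)]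
      _ = ENNReal.ofReal (c₀ * (1 - r)⁻¹ * V) := by
          rw [tsum_mul_left, tsum_geometric_of_lt_one hr0.le hr1]
          ring_nf

lemma vol_compare {M : Type*} [MetricSpace M] [MeasurableSpace M]
    (μ : Measure M) (c₀ : ℝ) (hc₀ : 1 < c₀)
    (hfin : ∀ (x : M) (r : ℝ), 0 < r → μ (ball x r) < ⊤)
    (hdbl : ∀ (x : M) (r : ℝ), 0 < r →
      (μ (ball x (2 * r))).toReal ≤ c₀ * (μ (ball x r)).toReal)
    (x x₀ : M) :
    (μ (ball x₀ 1)).toReal ≤ (2:ℝ) ^ (Real.logb 2 c₀) *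
      (1 + dist x x₀) ^ (Real.logb 2 c₀) * (μ (ball x 1)).toReal := by
  set d := Real.logb 2 c₀ with hd
  have hc₀0 : (0:ℝ) < c₀ := lt_trans one_pos hc₀
  have hd0 : 0 < d := Real.logb_pos one_lt_two hc₀
  set t := dist x x₀ with htdef
  have ht0 : 0 ≤ t := dist_nonneg
  have hlog0 : 0 ≤ Real.logb 2 (1 + t) := Real.logb_nonneg one_lt_two (by linarith)
  set k := ⌈Real.logb 2 (1 + t)⌉₊ with hk
  have hkge : Real.logb 2 (1 + t) ≤ (k:ℝ) := Nat.le_ceil _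
  have hkle : (k:ℝ) ≤ Real.logb 2 (1 + t) + 1 := (Nat.ceil_lt_add_one hlog0).le
  have h1t : (1:ℝ) + t ≤ 2 ^ k := by
    calc (1:ℝ) + t = 2 ^ (Real.logb 2 (1 + t)) :=
          (Real.rpow_logb two_pos (by norm_num) (by linarith)).symm
      _ ≤ 2 ^ ((k:ℝ)) := Real.rpow_le_rpow_of_exponent_le one_le_two hkge
      _ = 2 ^ k := Real.rpow_natCast 2 k
  have hsub : ball x₀ 1 ⊆ ball x (2 ^ k) := by
    intro y hy
    simp only [mem_ball] at hy ⊢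
    calc dist y x ≤ dist y x₀ + dist x₀ x := dist_triangle _ _ _
      _ < 1 + t := by rw [dist_comm x₀ x]; linarith
      _ ≤ 2 ^ k := h1t
  have hmono : (μ (ball x₀ 1)).toReal ≤ (μ (ball x (2 ^ k))).toReal :=
    ENNReal.toReal_mono (hfin x _ (by positivity)).ne (measure_mono hsub)
  have hc₀eq : c₀ = (2:ℝ) ^ d := (Real.rpow_logb two_pos (by norm_num) hc₀0).symm
  have hck : c₀ ^ k ≤ (2:ℝ) ^ d * (1 + t) ^ d := by
    calc c₀ ^ k = (2:ℝ) ^ (d * (k:ℝ)) := by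
          rw [hc₀eq, ← Real.rpow_natCast ((2:ℝ)^d) k,
            ← Real.rpow_mul (by norm_num : (0:ℝ) ≤ 2)]
      _ ≤ (2:ℝ) ^ (d * (Real.logb 2 (1+t) + 1)) :=
          Real.rpow_le_rpow_of_exponent_le one_le_two
            (mul_le_mul_of_nonneg_left hkle hd0.le)
      _ = (2:ℝ) ^ d * (1 + t) ^ d := by
          rw [show d * (Real.logb 2 (1+t) + 1) = d + Real.logb 2 (1+t) * d by ring,
            Real.rpow_add two_pos, Real.rpow_mul (by norm_num : (0:ℝ) ≤ 2),
            Real.rpow_logb two_pos (by norm_num) (by linarith)]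
          rw [Real.rpow_logb two_pos (by norm_num) (by linarith : (0:ℝ) < 1 + t)]
  calc (μ (ball x₀ 1)).toReal ≤ (μ (ball x (2 ^ k))).toReal := hmono
    _ ≤ c₀ ^ k * (μ (ball x 1)).toReal := doubling_iter μ c₀ hc₀0.le hdbl x k
    _ ≤ (2:ℝ) ^ d * (1 + t) ^ d * (μ (ball x 1)).toReal := by
        apply mul_le_mul_of_nonneg_right hck ENNReal.toReal_nonneg

set_option maxHeartbeats 2000000 in
theorem kernel_integral_decay {M : Type*} [MetricSpace M] [MeasurableSpace M]
    (μ : Measure M) (c₀ : ℝ) (hc₀ : 1 < c₀)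
    (hpos : ∀ (x : M) (r : ℝ), 0 < r → 0 < μ (ball x r))
    (hfin : ∀ (x : M) (r : ℝ), 0 < r → μ (ball x r) < ⊤)
    (hdbl : ∀ (x : M) (r : ℝ), 0 < r →
      (μ (ball x (2 * r))).toReal ≤ c₀ * (μ (ball x r)).toReal)
    (x₀ : M) (c A σ : ℝ) (hc : 0 < c) (hA : 0 < A)
    (hσ : Real.logb 2 c₀ < σ) :
    ∃ c' > 0, ∀ (K : ℕ → M → M → ℂ) (φ : M → ℂ) (C : ℝ), 0 ≤ C →
      (∀ (j : ℕ) (x y : M), ‖K j x y‖ ≤ c * (2 : ℝ) ^ (-(j : ℝ) * A) *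
        ((μ (ball x 1)).toReal)⁻¹ * (1 + dist x y) ^ (-(σ + Real.logb 2 c₀))) →
      (∀ y : M, ‖φ y‖ ≤ C * (1 + dist y x₀) ^ (-(σ + Real.logb 2 c₀))) →
      ∀ (j : ℕ), 1 ≤ j → ∀ x : M,
        ‖∫ y, K j x y * φ y ∂μ‖ ≤
          c' * C * (2 : ℝ) ^ (-(j : ℝ) * A) * (1 + dist x x₀) ^ (-σ) := by
  have hc₀0 : (0:ℝ) < c₀ := lt_trans one_pos hc₀
  set d := Real.logb 2 c₀ with hd
  have hd0 : 0 < d := Real.logb_pos one_lt_two hc₀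
  have hσ0 : 0 < σ := lt_trans hd0 hσ
  set s := σ + d with hsdef
  have hs0 : 0 < s := by positivity
  set Cd := c₀ * (1 - (2:ℝ) ^ (-σ))⁻¹ with hCd
  have h2σ : (2:ℝ) ^ (-σ) < 1 := Real.rpow_lt_one_of_one_lt_of_neg one_lt_two (by linarith)
  have hCd0 : 0 < Cd := mul_pos hc₀0 (inv_pos.mpr (by linarith))
  set Dd := (2:ℝ) ^ d with hDd
  have hDd0 : 0 < Dd := Real.rpow_pos_of_pos two_pos _
  set S2 := (2:ℝ) ^ s with hS2
  have hS20 : 0 < S2 := Real.rpow_pos_of_pos two_pos _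
  refine ⟨c * S2 * Cd * (1 + Dd), by positivity, ?_⟩
  intro K φ C hC hK hφ j hj x
  set E := (2:ℝ) ^ (-(j:ℝ) * A) with hE
  have hE0 : 0 < E := Real.rpow_pos_of_pos two_pos _
  set V := (μ (ball x 1)).toReal with hV
  have hV0 : 0 < V := ENNReal.toReal_pos (hpos x 1 one_pos).ne' (hfin x 1 one_pos).ne
  set V₀ := (μ (ball x₀ 1)).toReal with hV₀
  have hV₀0 : 0 ≤ V₀ := ENNReal.toReal_nonneg
  set t := dist x x₀ with htd
  have ht0 : 0 ≤ t := dist_nonneg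
  obtain ⟨G₁, hG₁m, hG₁b, hG₁i⟩ := exists_majorant μ c₀ hc₀ hfin hdbl σ hσ x
  obtain ⟨G₂, hG₂m, hG₂b, hG₂i⟩ := exists_majorant μ c₀ hc₀ hfin hdbl σ hσ x₀
  set κ := c * E * V⁻¹ * C * (1 + t/2) ^ (-s) with hκ
  have hκ0 : 0 ≤ κ :=
    mul_nonneg (mul_nonneg (mul_nonneg (mul_nonneg hc.le hE0.le)
      (inv_nonneg.mpr hV0.le)) hC) (Real.rpow_nonneg (by linarith) _)
  -- pointwise split
  have hsplit : ∀ y : M, (1 + dist x y) ^ (-s) * (1 + dist y x₀) ^ (-s)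
      ≤ (1 + t/2) ^ (-s) * ((1 + dist x y) ^ (-s) + (1 + dist y x₀) ^ (-s)) := by
    intro y
    have htri : t ≤ dist x y + dist y x₀ := dist_triangle x y x₀
    have hf1 : (0:ℝ) ≤ (1 + dist x y) ^ (-s) := Real.rpow_nonneg (by positivity) _
    have hf2 : (0:ℝ) ≤ (1 + dist y x₀) ^ (-s) := Real.rpow_nonneg (by positivity) _
    rcases le_or_gt (t/2) (dist x y) with h | h
    · have h1 : (1 + dist x y) ^ (-s) ≤ (1 + t/2) ^ (-s) :=
        Real.rpow_le_rpow_of_nonpos (by positivity) (by linarith) (by linarith)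
      nlinarith [mul_le_mul_of_nonneg_right h1 hf2,
        mul_nonneg (Real.rpow_nonneg (show (0:ℝ) ≤ 1 + t/2 by positivity) (-s)) hf1]
    · have h2 : (1 + dist y x₀) ^ (-s) ≤ (1 + t/2) ^ (-s) := by
        have : t/2 ≤ dist y x₀ := by have := dist_nonneg (x := x) (y := y); linarith
        exact Real.rpow_le_rpow_of_nonpos (by positivity) (by linarith) (by linarith)
      nlinarith [mul_le_mul_of_nonneg_left h2 hf1,
        mul_nonneg (Real.rpow_nonneg (show (0:ℝ) ≤ 1 + t/2 by positivity) (-s)) hf2]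
  -- pointwise ENNReal bound
  have hpt : ∀ y : M, ENNReal.ofReal ‖K j x y * φ y‖ ≤ ENNReal.ofReal κ * (G₁ y + G₂ y) := by
    intro y
    have hf1 : (0:ℝ) ≤ (1 + dist x y) ^ (-s) := Real.rpow_nonneg (by positivity) _
    have hf2 : (0:ℝ) ≤ (1 + dist y x₀) ^ (-s) := Real.rpow_nonneg (by positivity) _
    have hreal : ‖K j x y * φ y‖ ≤ κ * ((1 + dist x y) ^ (-s) + (1 + dist y x₀) ^ (-s)) := by
      rw [norm_mul]
      calc ‖K j x y‖ * ‖φ y‖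
          ≤ (c * E * V⁻¹ * (1 + dist x y) ^ (-s)) * (C * (1 + dist y x₀) ^ (-s)) :=
            mul_le_mul (hK j x y) (hφ y) (norm_nonneg _) (by positivity)
        _ = (c * E * V⁻¹ * C) * ((1 + dist x y) ^ (-s) * (1 + dist y x₀) ^ (-s)) := by ring
        _ ≤ (c * E * V⁻¹ * C) *
            ((1 + t/2) ^ (-s) * ((1 + dist x y) ^ (-s) + (1 + dist y x₀) ^ (-s))) := by
            apply mul_le_mul_of_nonneg_left (hsplit y)
            have : (0:ℝ) ≤ V⁻¹ := inv_nonneg.mpr hV0.le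
            positivity
        _ = κ * ((1 + dist x y) ^ (-s) + (1 + dist y x₀) ^ (-s)) := by rw [hκ]; ring
    calc ENNReal.ofReal ‖K j x y * φ y‖
        ≤ ENNReal.ofReal (κ * ((1 + dist x y) ^ (-s) + (1 + dist y x₀) ^ (-s))) :=
          ENNReal.ofReal_le_ofReal hreal
      _ = ENNReal.ofReal κ *
          (ENNReal.ofReal ((1 + dist x y) ^ (-s)) + ENNReal.ofReal ((1 + dist y x₀) ^ (-s))) := by
          rw [ENNReal.ofReal_mul hκ0, ENNReal.ofReal_add hf1 hf2]
      _ ≤ ENNReal.ofReal κ * (G₁ y + G₂ y) := by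
          apply mul_le_mul_right
          apply add_le_add (hG₁b y)
          have := hG₂b y
          rwa [dist_comm x₀ y] at this
  -- real arithmetic for the final constant
  have hvc : V₀ ≤ Dd * (1 + t) ^ d * V := vol_compare μ c₀ hc₀ hfin hdbl x x₀
  have hhalf : (1 + t/2) ^ (-s) ≤ S2 * (1 + t) ^ (-s) := by
    have e1 : ((1 + t)/2) ^ (-s) = (1 + t) ^ (-s) * S2 := by
      rw [Real.div_rpow (by linarith) (by norm_num), hS2,
        Real.rpow_neg (by norm_num : (0:ℝ) ≤ 2)]
      field_simp
    calc (1 + t/2) ^ (-s) ≤ ((1 + t)/2) ^ (-s) :=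
          Real.rpow_le_rpow_of_nonpos (by linarith) (by linarith) (by linarith)
      _ = S2 * (1 + t) ^ (-s) := by rw [e1]; ring
  have hQP : (1 + t) ^ (-s) ≤ (1 + t) ^ (-σ) :=
    Real.rpow_le_rpow_of_exponent_le (by linarith) (by rw [hsdef]; linarith)
  have hQd : (1 + t) ^ (-s) * (1 + t) ^ d = (1 + t) ^ (-σ) := by
    rw [← Real.rpow_add (by linarith), hsdef]
    ring_nf
  have harith : κ * (Cd * V + Cd * V₀) ≤ c * S2 * Cd * (1 + Dd) * C * E * (1 + t) ^ (-σ) := by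
    have hκle : κ ≤ c * E * V⁻¹ * C * (S2 * (1 + t) ^ (-s)) := by
      rw [hκ]
      apply mul_le_mul_of_nonneg_left hhalf
      have : (0:ℝ) ≤ V⁻¹ := inv_nonneg.mpr hV0.le
      positivity
    have hsum : Cd * V + Cd * V₀ ≤ Cd * V + Cd * (Dd * (1 + t) ^ d * V) :=
      add_le_add_right (mul_le_mul_of_nonneg_left hvc hCd0.le) _
    have hVinv : V⁻¹ * V = 1 := inv_mul_cancel₀ hV0.ne'
    have hQ0 : (0:ℝ) ≤ (1 + t) ^ (-s) := Real.rpow_nonneg (by linarith) _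
    have htd0 : (0:ℝ) ≤ (1 + t) ^ d := Real.rpow_nonneg (by linarith) _
    calc κ * (Cd * V + Cd * V₀)
        ≤ (c * E * V⁻¹ * C * (S2 * (1 + t) ^ (-s))) * (Cd * V + Cd * (Dd * (1 + t) ^ d * V)) := by
          apply mul_le_mul hκle hsum (by positivity) (by
            have : (0:ℝ) ≤ V⁻¹ := inv_nonneg.mpr hV0.le
            positivity)
      _ = c * C * E * S2 * Cd * ((1 + t) ^ (-s) + Dd * ((1 + t) ^ (-s) * (1 + t) ^ d))
            * (V⁻¹ * V) := by ring
      _ = c * C * E * S2 * Cd * ((1 + t) ^ (-s) + Dd * (1 + t) ^ (-σ)) := by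
          rw [hVinv, hQd]; ring
      _ ≤ c * C * E * S2 * Cd * ((1 + t) ^ (-σ) + Dd * (1 + t) ^ (-σ)) := by
          apply mul_le_mul_of_nonneg_left (add_le_add_left hQP _)
          positivity
      _ = c * S2 * Cd * (1 + Dd) * C * E * (1 + t) ^ (-σ) := by ring
  -- assemble
  have hlint : ∫⁻ y, ENNReal.ofReal ‖K j x y * φ y‖ ∂μ
      ≤ ENNReal.ofReal (c * S2 * Cd * (1 + Dd) * C * E * (1 + t) ^ (-σ)) := by
    calc ∫⁻ y, ENNReal.ofReal ‖K j x y * φ y‖ ∂μ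
        ≤ ∫⁻ y, ENNReal.ofReal κ * (G₁ y + G₂ y) ∂μ := lintegral_mono hpt
      _ = ENNReal.ofReal κ * ∫⁻ y, (G₁ y + G₂ y) ∂μ :=
          lintegral_const_mul' _ _ ENNReal.ofReal_ne_top
      _ = ENNReal.ofReal κ * (∫⁻ y, G₁ y ∂μ + ∫⁻ y, G₂ y ∂μ) := by
          rw [lintegral_add_left hG₁m]
      _ ≤ ENNReal.ofReal κ * (ENNReal.ofReal (Cd * V) + ENNReal.ofReal (Cd * V₀)) :=
          mul_le_mul_right (add_le_add hG₁i hG₂i) _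
      _ = ENNReal.ofReal (κ * (Cd * V + Cd * V₀)) := by
          rw [← ENNReal.ofReal_add (by positivity) (mul_nonneg hCd0.le hV₀0),
            ← ENNReal.ofReal_mul hκ0]
      _ ≤ ENNReal.ofReal (c * S2 * Cd * (1 + Dd) * C * E * (1 + t) ^ (-σ)) :=
          ENNReal.ofReal_le_ofReal harith
  calc ‖∫ y, K j x y * φ y ∂μ‖ ≤ (∫⁻ y, ENNReal.ofReal ‖K j x y * φ y‖ ∂μ).toReal :=
        norm_integral_le_lintegral_norm _
    _ ≤ c * S2 * Cd * (1 + Dd) * C * E * (1 + t) ^ (-σ) :=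
        ENNReal.toReal_le_of_le_ofReal (by positivity) hlint
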